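/- Let p_1, p_2, p_3 be three points of a line combinatorics, each of multiplicity greater than two, regarded as point-type admissible maps. Then {p_1, p_2, p_3} form a triangle of admissible classes (i.e., Υ({α_1,α_2,α_3}) = Σ Υ({α_i}) - 1 for the associated point-type admissible maps α_i) if and only if p_i ∩ p_j ≠ ∅ for all i ≠ j but p_1 ∩ p_2 ∩ p_3 = ∅ (the three points are pairwise joined by lines but not mutually incident via a common line). -/

import Mathlib

open scoped BigOperators

/-- `H = ℤⁿ / ℤ·(1,…,1)`. -/
abbrev Hmod (n : ℕ) : Type := (Fin n → ℤ) ⧸ Submodule.span ℤ {(fun _ => (1 : ℤ) : Fin n → ℤ)}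

/-- The class `e_i` of the `i`-th standard basis vector in `H`. -/
def egen (n : ℕ) (i : Fin n) : Hmod n := Submodule.Quotient.mk (Pi.single i 1)

/-- A line combinatorics on `n` lines. -/
structure LineCombinatorics (n : ℕ) where
  P : Finset (Finset (Fin n))
  two_le : ∀ p ∈ P, 2 ≤ p.card
  existsUnique : ∀ i j : Fin n, i ≠ j → ∃! p, p ∈ P ∧ i ∈ p ∧ j ∈ p

/-- `α : H → ℤ^r` is an `(r+1)`-admissible map. -/
def IsAdmissible {n : ℕ} (C : LineCombinatorics n) (r : ℕ)
    (α : Hmod n →ₗ[ℤ] (Fin r → ℤ)) : Prop :=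
  Function.Surjective α ∧
    ∀ p ∈ C.P, ∀ i ∈ p,
      ¬ LinearIndependent ℤ ![α (egen n i), ∑ j ∈ p, α (egen n j)]

/-- `α` is a point-type admissible map associated with the point `p` (of
multiplicity `m = p.card ≥ 3`): a surjection onto `ℤ^{m-1}` killing all the
lines outside `p`, and mapping any `m-1` of the lines of `p` to linearly
independent vectors (so `p` is its only non-double point; cf. Example 1 of the
paper). -/
def IsPointType {n : ℕ} (C : LineCombinatorics n) (p : Finset (Fin n))
    (α : Hmod n →ₗ[ℤ] (Fin (p.card - 1) → ℤ)) : Prop :=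
  p ∈ C.P ∧ 3 ≤ p.card ∧ Function.Surjective α ∧
    (∀ j : Fin n, j ∉ p → α (egen n j) = 0) ∧
    ∀ j ∈ p, LinearIndependent ℤ (fun l : {x // x ∈ p.erase j} => α (egen n l.1))

/-- Three admissible maps form a triangle if the corank of the intersection of
their kernels equals `Υ({α₁}) + Υ({α₂}) + Υ({α₃}) - 1`. -/
def IsTriangle {n r₁ r₂ r₃ : ℕ}
    (α₁ : Hmod n →ₗ[ℤ] (Fin r₁ → ℤ)) (α₂ : Hmod n →ₗ[ℤ] (Fin r₂ → ℤ))
    (α₃ : Hmod n →ₗ[ℤ] (Fin r₃ → ℤ)) : Prop :=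
  Module.finrank ℤ (Hmod n) -
      Module.finrank ℤ
        ↥(LinearMap.ker α₁ ⊓ LinearMap.ker α₂ ⊓ LinearMap.ker α₃) =
    r₁ + r₂ + r₃ - 1

section AuxiliaryForStatement16

open Submodule Module


abbrev HG (ι : Type) : Type := (ι → ℤ) ⧸ Submodule.span ℤ {(fun _ => (1:ℤ) : ι → ℤ)}

lemma mem_span_one {ι : Type} (x : ι → ℤ) :
    x ∈ Submodule.span ℤ {(fun _ => (1:ℤ) : ι → ℤ)} ↔ ∃ c : ℤ, ∀ i, x i = c := by
  rw [Submodule.mem_span_singleton]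
  constructor
  · rintro ⟨c, rfl⟩; exact ⟨c, fun i => by simp⟩
  · rintro ⟨c, hc⟩; exact ⟨c, by funext i; simp [hc i]⟩

lemma finrank_HG (ι : Type) [Fintype ι] [DecidableEq ι] [Nonempty ι] :
    Module.finrank ℤ (HG ι) = Fintype.card ι - 1 := by
  obtain ⟨i₀⟩ := ‹Nonempty ι›
  let F : (ι → ℤ) →ₗ[ℤ] ({i : ι // i ≠ i₀} → ℤ) :=
    { toFun := fun x s => x s.1 - x i₀
      map_add' := by intros; funext s; simp; ring
      map_smul' := by intros; funext s; simp; ring }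
  have hsurj : Function.Surjective F := by
    intro y
    refine ⟨fun i => if h : i = i₀ then 0 else y ⟨i, h⟩, ?_⟩
    funext s
    simp [F, s.2]
  have hker : LinearMap.ker F = Submodule.span ℤ {(fun _ => (1:ℤ) : ι → ℤ)} := by
    ext x
    rw [LinearMap.mem_ker, mem_span_one]
    constructor
    · intro h
      refine ⟨x i₀, fun i => ?_⟩
      by_cases hi : i = i₀
      · rw [hi]
      · have := congrFun h ⟨i, hi⟩
        simpa [F, sub_eq_zero] using this
    · rintro ⟨c, hc⟩
      funext s
      simp [F, hc s.1, hc i₀]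
  have e1 : HG ι ≃ₗ[ℤ] ((ι → ℤ) ⧸ LinearMap.ker F) :=
    Submodule.quotEquivOfEq _ _ hker.symm
  have e2 : ((ι → ℤ) ⧸ LinearMap.ker F) ≃ₗ[ℤ] ({i : ι // i ≠ i₀} → ℤ) :=
    F.quotKerEquivOfSurjective hsurj
  rw [e1.finrank_eq, e2.finrank_eq, Module.finrank_pi]
  rw [Fintype.card_subtype_compl, Fintype.card_subtype_eq]


section B
variable {n : ℕ} {Q : Type} [Fintype Q] [DecidableEq Q] [Nonempty Q]

/-- the submodule of functions constant on fibers of `q` -/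
def fibSub (q : Fin n → Q) : Submodule ℤ (Fin n → ℤ) where
  carrier := {x | ∀ i j, q i = q j → x i = x j}
  add_mem' := fun hx hy i j h => by simp [hx i j h, hy i j h]
  zero_mem' := by intro i j h; simp
  smul_mem' := fun c x hx i j h => by simp [hx i j h]

lemma range_funLeft (q : Fin n → Q) (hq : Function.Surjective q) :
    LinearMap.range (LinearMap.funLeft ℤ ℤ q) = fibSub q := by
  apply le_antisymm
  · rintro _ ⟨y, rfl⟩ i j h
    simp [LinearMap.funLeft, h]
  · intro x hx
    refine ⟨fun c => x (Function.surjInv hq c), ?_⟩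
    funext i
    exact hx _ i (Function.surjInv_eq hq (q i))

lemma finrank_map_mkQ_fibSub (q : Fin n → Q) (hq : Function.Surjective q) :
    Module.finrank ℤ
      (Submodule.map (Submodule.span ℤ {(fun _ => (1:ℤ) : Fin n → ℤ)}).mkQ (fibSub q)) =
      Fintype.card Q - 1 := by
  set N := Submodule.span ℤ {(fun _ => (1:ℤ) : Fin n → ℤ)}
  set NQ := Submodule.span ℤ {(fun _ => (1:ℤ) : Q → ℤ)}
  have hle : NQ ≤ Submodule.comap (LinearMap.funLeft ℤ ℤ q) N := by
    rw [Submodule.span_le]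
    rintro _ rfl
    exact Submodule.mem_span_singleton_self _
  let ψ : HG Q →ₗ[ℤ] HG (Fin n) := Submodule.mapQ NQ N (LinearMap.funLeft ℤ ℤ q) hle
  have hinj : Function.Injective ψ := by
    rw [← LinearMap.ker_eq_bot, LinearMap.ker_eq_bot']
    intro m hm
    obtain ⟨x, rfl⟩ := NQ.mkQ_surjective m
    have : LinearMap.funLeft ℤ ℤ q x ∈ N := by
      have := hm
      rw [show (NQ.mkQ x) = Submodule.Quotient.mk x from rfl] at this
      rw [Submodule.mapQ_apply] at this
      exact (Submodule.Quotient.mk_eq_zero _).1 this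
    rw [Submodule.mem_span_singleton] at this
    obtain ⟨c, hc⟩ := this
    have hx : x = c • (fun _ => (1:ℤ)) := by
      funext d
      obtain ⟨i, rfl⟩ := hq d
      exact (congrFun hc i).symm
    show NQ.mkQ x = 0
    rw [hx, ← LinearMap.mem_ker, Submodule.ker_mkQ]
    exact Submodule.smul_mem _ _ (Submodule.mem_span_singleton_self _)
  have hrange : LinearMap.range ψ = Submodule.map N.mkQ (fibSub q) := by
    rw [← range_funLeft q hq]
    have h1 : LinearMap.range ψ = LinearMap.range (ψ.comp NQ.mkQ) :=
      (LinearMap.range_comp_of_range_eq_top ψ (Submodule.range_mkQ NQ)).symm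
    rw [h1, Submodule.mapQ_mkQ, LinearMap.range_comp]
  calc Module.finrank ℤ (Submodule.map N.mkQ (fibSub q))
      = Module.finrank ℤ (LinearMap.range ψ) := by rw [hrange]
    _ = Module.finrank ℤ (HG Q) := (LinearEquiv.finrank_eq (LinearEquiv.ofInjective ψ hinj)).symm
    _ = Fintype.card Q - 1 := finrank_HG Q
end B

section cells
variable {n : ℕ}

/-- functions constant on `B` -/
def constSub (B : Finset (Fin n)) : Submodule ℤ (Fin n → ℤ) where
  carrier := {x | ∀ i ∈ B, ∀ j ∈ B, x i = x j}
  add_mem' := fun hx hy i hi j hj => by simp [hx i hi j hj, hy i hi j hj]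
  zero_mem' := by intro i _ j _; simp
  smul_mem' := fun c x hx i hi j hj => by simp [hx i hi j hj]

lemma span_one_le_constSub (B : Finset (Fin n)) :
    Submodule.span ℤ {(fun _ => (1:ℤ) : Fin n → ℤ)} ≤ constSub B := by
  rw [Submodule.span_le]
  rintro _ rfl i _ j _
  rfl

lemma constSub_inf_constSub {B₁ B₂ : Finset (Fin n)} (h : (B₁ ∩ B₂).Nonempty) :
    constSub B₁ ⊓ constSub B₂ = constSub (B₁ ∪ B₂) := by
  obtain ⟨a, ha⟩ := h
  rw [Finset.mem_inter] at ha
  apply le_antisymm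
  · rintro x ⟨hx₁, hx₂⟩ i hi j hj
    have key : ∀ i ∈ B₁ ∪ B₂, x i = x a := by
      intro i hi
      rcases Finset.mem_union.1 hi with h | h
      · exact hx₁ i h a ha.1
      · exact hx₂ i h a ha.2
    rw [key i hi, key j hj]
  · intro x hx
    exact ⟨fun i hi j hj => hx i (Finset.mem_union_left _ hi) j (Finset.mem_union_left _ hj),
      fun i hi j hj => hx i (Finset.mem_union_right _ hi) j (Finset.mem_union_right _ hj)⟩

lemma finrank_map_mkQ_iInf {k : ℕ} (hk : 0 < k) (B : Fin k → Finset (Fin n))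
    (hd : ∀ i j, i ≠ j → Disjoint (B i) (B j)) (hne : ∀ j, (B j).Nonempty) :
    Module.finrank ℤ
      (Submodule.map (Submodule.span ℤ {(fun _ => (1:ℤ) : Fin n → ℤ)}).mkQ
        (⨅ j, constSub (B j))) = n - (∑ j, (B j).card) + k - 1 ∧
      (∑ j, (B j).card) ≤ n := by
  classical
  have hsum : ∑ j, (B j).card ≤ n := by
    have : (Finset.univ.biUnion B).card = ∑ j, (B j).card :=
      Finset.card_biUnion (fun i _ j _ hij => hd i j hij)
    rw [← this]
    simpa using (Finset.card_le_card (Finset.subset_univ (Finset.univ.biUnion B)))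
  have : Nonempty ({i : Fin n // ∀ j, i ∉ B j} ⊕ Fin k) := ⟨Sum.inr ⟨0, hk⟩⟩
  let q : Fin n → ({i : Fin n // ∀ j, i ∉ B j} ⊕ Fin k) := fun i =>
    if h : ∃ j, i ∈ B j then Sum.inr h.choose else Sum.inl ⟨i, by push_neg at h; exact h⟩
  have hq_mem : ∀ i j, i ∈ B j → q i = Sum.inr j := by
    intro i j hij
    have hex : ∃ j, i ∈ B j := ⟨j, hij⟩
    have : hex.choose = j := by
      by_contra hne'
      exact (Finset.disjoint_left.1 (hd _ _ hne') hex.choose_spec) hij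
    simp [q, dif_pos hex, this]
  have hq_not : ∀ i (h : ∀ j, i ∉ B j), q i = Sum.inl ⟨i, h⟩ := by
    intro i h
    have : ¬ ∃ j, i ∈ B j := by push_neg; exact h
    simp [q, dif_neg this]
  have hqsurj : Function.Surjective q := by
    rintro (⟨i, hi⟩ | j)
    · exact ⟨i, hq_not i hi⟩
    · obtain ⟨i, hi⟩ := hne j
      exact ⟨i, hq_mem i j hi⟩
  have hfib : fibSub q = ⨅ j, constSub (B j) := by
    apply le_antisymm
    · intro x hx
      rw [Submodule.mem_iInf]
      intro j i hi i' hi'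
      exact hx i i' (by rw [hq_mem i j hi, hq_mem i' j hi'])
    · intro x hx i i' hqe
      rw [Submodule.mem_iInf] at hx
      by_cases h : ∃ j, i ∈ B j
      · obtain ⟨j, hj⟩ := h
        rw [hq_mem i j hj] at hqe
        by_cases h' : ∃ j', i' ∈ B j'
        · obtain ⟨j', hj'⟩ := h'
          rw [hq_mem i' j' hj'] at hqe
          obtain rfl : j = j' := Sum.inr_injective hqe
          exact hx j i hj i' hj'
        · push_neg at h'
          rw [hq_not i' h'] at hqe
          simp at hqe
      · push_neg at h
        rw [hq_not i h] at hqe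
        by_cases h' : ∃ j', i' ∈ B j'
        · obtain ⟨j', hj'⟩ := h'
          rw [hq_mem i' j' hj'] at hqe
          exact absurd hqe (by simp)
        · push_neg at h'
          rw [hq_not i' h'] at hqe
          simp only [Sum.inl.injEq, Subtype.mk.injEq] at hqe
          rw [hqe]
  have hcard : Fintype.card ({i : Fin n // ∀ j, i ∉ B j} ⊕ Fin k)
      = n - (∑ j, (B j).card) + k := by
    rw [Fintype.card_sum, Fintype.card_fin]
    congr 1
    rw [Fintype.card_subtype]
    have : (Finset.univ.filter fun i : Fin n => ∀ j, i ∉ B j)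
        = Finset.univ \ Finset.univ.biUnion B := by
      ext i; simp
    rw [this, Finset.card_sdiff_of_subset (Finset.subset_univ _),
      Finset.card_biUnion (fun i _ j _ hij => hd i j hij)]
    simp
  refine ⟨?_, hsum⟩
  rw [← hfib, finrank_map_mkQ_fibSub q hqsurj, hcard]

end cells

section ker
variable {n : ℕ}

lemma egen_sum_repr (x : Fin n → ℤ) :
    (Submodule.span ℤ {(fun _ => (1:ℤ) : Fin n → ℤ)}).mkQ x = ∑ j, x j • egen n j := by
  have hx : x = ∑ j, x j • Pi.single j (1:ℤ) := by
    conv_lhs => rw [← Finset.univ_sum_single x]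
    refine Finset.sum_congr rfl fun j _ => ?_
    rw [← Pi.single_smul, smul_eq_mul, mul_one]
  conv_lhs => rw [hx]
  rw [map_sum]
  refine Finset.sum_congr rfl fun j _ => ?_
  rw [map_smul]
  rfl

lemma alpha_apply {r : ℕ} (α : Hmod n →ₗ[ℤ] (Fin r → ℤ)) (x : Fin n → ℤ) :
    α ((Submodule.span ℤ {(fun _ => (1:ℤ) : Fin n → ℤ)}).mkQ x)
      = ∑ j, x j • α (egen n j) := by
  rw [egen_sum_repr, map_sum]
  simp

lemma sum_p_alpha {r : ℕ} (α : Hmod n →ₗ[ℤ] (Fin r → ℤ)) {p : Finset (Fin n)}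
    (hzero : ∀ j ∉ p, α (egen n j) = 0) :
    ∑ j ∈ p, α (egen n j) = 0 := by
  have h1 : ∑ j ∈ p, α (egen n j) = ∑ j : Fin n, α (egen n j) :=
    Finset.sum_subset (Finset.subset_univ p) (fun j _ hj => hzero j hj)
  have h2 : (∑ j : Fin n, α (egen n j)) = α ((Submodule.span ℤ {(fun _ => (1:ℤ) : Fin n → ℤ)}).mkQ (fun _ => 1)) := by
    rw [alpha_apply]
    simp
  rw [h1, h2]
  have : (Submodule.span ℤ {(fun _ => (1:ℤ) : Fin n → ℤ)}).mkQ (fun _ => 1) = 0 := by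
    rw [← LinearMap.mem_ker, Submodule.ker_mkQ]
    exact Submodule.mem_span_singleton_self _
  rw [this, map_zero]

lemma ker_pointType {r : ℕ} (α : Hmod n →ₗ[ℤ] (Fin r → ℤ)) {p : Finset (Fin n)}
    (hzero : ∀ j ∉ p, α (egen n j) = 0) {j₀ : Fin n} (hj₀ : j₀ ∈ p)
    (hind : LinearIndependent ℤ (fun l : {x // x ∈ p.erase j₀} => α (egen n l.1))) :
    LinearMap.ker α
      = Submodule.map (Submodule.span ℤ {(fun _ => (1:ℤ) : Fin n → ℤ)}).mkQ (constSub p) := by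
  set N := Submodule.span ℤ {(fun _ => (1:ℤ) : Fin n → ℤ)}
  set v : Fin n → (Fin r → ℤ) := fun j => α (egen n j) with hv
  apply le_antisymm
  · intro m hm
    obtain ⟨x, rfl⟩ := N.mkQ_surjective m
    rw [LinearMap.mem_ker, alpha_apply] at hm
    have hm' : ∑ j ∈ p, x j • v j = 0 := by
      rw [← hm]
      exact Finset.sum_subset (Finset.subset_univ p) fun j _ hj => by
        rw [show v j = 0 from hzero j hj, smul_zero]
    have h1 : ∑ j ∈ p, (x j - x j₀) • v j = 0 := by
      have := sum_p_alpha α hzero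
      rw [← hv] at this
      calc ∑ j ∈ p, (x j - x j₀) • v j
          = ∑ j ∈ p, (x j • v j) - x j₀ • ∑ j ∈ p, v j := by
            rw [Finset.smul_sum, ← Finset.sum_sub_distrib]
            refine Finset.sum_congr rfl fun j _ => ?_
            rw [sub_smul]
        _ = 0 := by rw [hm', this, smul_zero, sub_zero]
    have h2 : ∑ j ∈ p.erase j₀, (x j - x j₀) • v j = 0 := by
      rw [Finset.sum_erase _ (by rw [sub_self, zero_smul])]
      exact h1
    have h3 : ∑ l ∈ (p.erase j₀).attach, (x l.1 - x j₀) • v l.1 = 0 := by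
      rw [Finset.sum_attach (p.erase j₀) (fun j => (x j - x j₀) • v j)]
      exact h2
    have h4 : ∀ l : {x // x ∈ p.erase j₀}, x l.1 - x j₀ = 0 := by
      have := Fintype.linearIndependent_iff.1 hind (fun l => x l.1 - x j₀) ?_
      · exact this
      · rw [Finset.univ_eq_attach]
        exact h3
    have hconst : ∀ i ∈ p, x i = x j₀ := by
      intro i hi
      by_cases h : i = j₀
      · rw [h]
      · exact sub_eq_zero.1 (h4 ⟨i, Finset.mem_erase.2 ⟨h, hi⟩⟩)
    refine ⟨x, fun i hi j hj => by rw [hconst i hi, hconst j hj], rfl⟩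
  · rintro _ ⟨x, hx, rfl⟩
    rw [LinearMap.mem_ker, alpha_apply]
    have hout : ∑ j : Fin n, x j • v j = ∑ j ∈ p, x j • v j :=
      (Finset.sum_subset (Finset.subset_univ p)
        (fun j _ hj => by rw [show v j = 0 from hzero j hj, smul_zero])).symm
    rw [hout]
    have : ∀ j ∈ p, x j • v j = x j₀ • v j := fun j hj => by rw [hx j hj j₀ hj₀]
    rw [Finset.sum_congr rfl this, ← Finset.smul_sum]
    have := sum_p_alpha α hzero
    rw [← hv] at this
    rw [this, smul_zero]

lemma map_mkQ_inf {R V : Type*} [Ring R] [AddCommGroup V] [Module R V] (N M₁ M₂ : Submodule R V)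
    (h₂ : N ≤ M₂) :
    Submodule.map N.mkQ M₁ ⊓ Submodule.map N.mkQ M₂ = Submodule.map N.mkQ (M₁ ⊓ M₂) := by
  apply le_antisymm
  · rintro m ⟨⟨x, hx, rfl⟩, ⟨y, hy, hxy⟩⟩
    have hxy' : x - y ∈ N := by
      rw [← Submodule.ker_mkQ N, LinearMap.mem_ker, map_sub, hxy, sub_self]
    have hxM₂ : x ∈ M₂ := by
      have : x = (x - y) + y := by abel
      rw [this]
      exact M₂.add_mem (h₂ hxy') hy
    exact ⟨x, ⟨hx, hxM₂⟩, rfl⟩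
  · exact le_inf (Submodule.map_mono inf_le_left) (Submodule.map_mono inf_le_right)

lemma iInf_fin_one {α : Type*} [CompleteLattice α] (f : Fin 1 → α) : (⨅ j, f j) = f 0 :=
  le_antisymm (iInf_le f 0) (le_iInf fun j => by fin_cases j; exact le_rfl)

lemma iInf_fin_two {α : Type*} [CompleteLattice α] (f : Fin 2 → α) : (⨅ j, f j) = f 0 ⊓ f 1 :=
  le_antisymm (le_inf (iInf_le f 0) (iInf_le f 1))
    (le_iInf fun j => by fin_cases j <;> simp [inf_le_left, inf_le_right])

lemma iInf_fin_three {α : Type*} [CompleteLattice α] (f : Fin 3 → α) :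
    (⨅ j, f j) = f 0 ⊓ f 1 ⊓ f 2 :=
  le_antisymm (le_inf (le_inf (iInf_le f 0) (iInf_le f 1)) (iInf_le f 2))
    (le_iInf fun j => by
      fin_cases j
      · exact inf_le_left.trans inf_le_left
      · exact inf_le_left.trans inf_le_right
      · exact inf_le_right)

end ker

section helpers
variable {n : ℕ}

lemma corank_one (S : Finset (Fin n)) (hS : S.Nonempty) :
    Module.finrank ℤ
      (Submodule.map (Submodule.span ℤ {(fun _ => (1:ℤ) : Fin n → ℤ)}).mkQ (constSub S))
      = n - S.card ∧ S.card ≤ n := by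
  obtain ⟨h1, h2⟩ := finrank_map_mkQ_iInf (k := 1) one_pos ![S]
    (fun i j hij => absurd (Subsingleton.elim i j) hij) (fun j => by fin_cases j <;> exact hS)
  rw [iInf_fin_one] at h1
  simp only [Matrix.cons_val_zero, Fin.sum_univ_one] at h1 h2
  exact ⟨h1.trans (by omega), h2⟩

lemma corank_two (S T : Finset (Fin n)) (hd : Disjoint S T) (hS : S.Nonempty) (hT : T.Nonempty) :
    Module.finrank ℤ
      (Submodule.map (Submodule.span ℤ {(fun _ => (1:ℤ) : Fin n → ℤ)}).mkQ
        (constSub S ⊓ constSub T))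
      = n - (S.card + T.card) + 1 ∧ S.card + T.card ≤ n := by
  obtain ⟨h1, h2⟩ := finrank_map_mkQ_iInf (k := 2) two_pos ![S, T]
    (fun i j hij => by fin_cases i <;> fin_cases j <;> simp_all [disjoint_comm])
    (fun j => by fin_cases j <;> assumption)
  rw [iInf_fin_two] at h1
  simp only [Matrix.cons_val_zero, Matrix.cons_val_one, Matrix.head_cons,
    Fin.sum_univ_two] at h1 h2
  exact ⟨h1.trans (by omega), h2⟩

lemma corank_three (S T U : Finset (Fin n)) (hST : Disjoint S T) (hSU : Disjoint S U)
    (hTU : Disjoint T U) (hS : S.Nonempty) (hT : T.Nonempty) (hU : U.Nonempty) :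
    Module.finrank ℤ
      (Submodule.map (Submodule.span ℤ {(fun _ => (1:ℤ) : Fin n → ℤ)}).mkQ
        (constSub S ⊓ constSub T ⊓ constSub U))
      = n - (S.card + T.card + U.card) + 2 ∧ S.card + T.card + U.card ≤ n := by
  obtain ⟨h1, h2⟩ := finrank_map_mkQ_iInf (k := 3) three_pos ![S, T, U]
    (fun i j hij => by fin_cases i <;> fin_cases j <;> simp_all [disjoint_comm])
    (fun j => by fin_cases j <;> assumption)
  rw [iInf_fin_three] at h1
  simp only [Matrix.cons_val_zero, Matrix.cons_val_one, Matrix.head_cons,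
    Fin.sum_univ_three, Matrix.cons_val_two, Matrix.tail_cons, Matrix.vecHead,
    Matrix.vecTail, Matrix.cons_val', Matrix.cons_val_fin_one, Matrix.empty_val',
    Function.comp] at h1 h2
  have hred : (![T, U] (Fin.succ 0)) = U := rfl
  exact ⟨h1.trans (by rw [hred]; omega), h2⟩

lemma inter_eq_singleton {C : LineCombinatorics n} {p q : Finset (Fin n)}
    (hp : p ∈ C.P) (hq : q ∈ C.P) (hne : p ≠ q) {a : Fin n} (ha : a ∈ p ∩ q) :
    p ∩ q = {a} := by
  refine Finset.eq_singleton_iff_unique_mem.2 ⟨ha, fun b hb => ?_⟩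
  by_contra hba
  obtain ⟨u, -, huni⟩ := C.existsUnique b a (by exact hba)
  rw [Finset.mem_inter] at ha hb
  have h1 : p = u := huni p ⟨hp, hb.1, ha.1⟩
  have h2 : q = u := huni q ⟨hq, hb.2, ha.2⟩
  exact hne (h1.trans h2.symm)

end helpers

end AuxiliaryForStatement16

/-- Three points `p₁, p₂, p₃` of multiplicity greater than
two, regarded as point-type admissible maps `α₁, α₂, α₃`, form a triangle of
admissible classes if and only if they pairwise share a line but no line goes
through all three of them. -/
theorem pointType_triangle_iff {n : ℕ} (C : LineCombinatorics n)
    (p₁ p₂ p₃ : Finset (Fin n))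
    (α₁ : Hmod n →ₗ[ℤ] (Fin (p₁.card - 1) → ℤ))
    (α₂ : Hmod n →ₗ[ℤ] (Fin (p₂.card - 1) → ℤ))
    (α₃ : Hmod n →ₗ[ℤ] (Fin (p₃.card - 1) → ℤ))
    (h₁ : IsPointType C p₁ α₁) (h₂ : IsPointType C p₂ α₂)
    (h₃ : IsPointType C p₃ α₃) :
    IsTriangle α₁ α₂ α₃ ↔
      ((p₁ ∩ p₂).Nonempty ∧ (p₁ ∩ p₃).Nonempty ∧ (p₂ ∩ p₃).Nonempty ∧
        p₁ ∩ p₂ ∩ p₃ = ∅) := by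
  classical
  obtain ⟨hP₁, hm₁, -, hz₁, hind₁⟩ := h₁
  obtain ⟨hP₂, hm₂, -, hz₂, hind₂⟩ := h₂
  obtain ⟨hP₃, hm₃, -, hz₃, hind₃⟩ := h₃
  obtain ⟨a₁, ha₁⟩ : p₁.Nonempty := Finset.card_pos.1 (by omega)
  obtain ⟨a₂, ha₂⟩ : p₂.Nonempty := Finset.card_pos.1 (by omega)
  obtain ⟨a₃, ha₃⟩ : p₃.Nonempty := Finset.card_pos.1 (by omega)
  have hn1 : p₁.card ≤ n := by
    simpa using Finset.card_le_card (Finset.subset_univ p₁)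
  have : Nonempty (Fin n) := ⟨⟨0, by omega⟩⟩
  have hH : Module.finrank ℤ (Hmod n) = n - 1 := by
    simpa using finrank_HG (Fin n)
  have hker : LinearMap.ker α₁ ⊓ LinearMap.ker α₂ ⊓ LinearMap.ker α₃
      = Submodule.map (Submodule.span ℤ {(fun _ => (1:ℤ) : Fin n → ℤ)}).mkQ
        (constSub p₁ ⊓ constSub p₂ ⊓ constSub p₃) := by
    rw [ker_pointType α₁ hz₁ ha₁ (hind₁ _ ha₁),
        ker_pointType α₂ hz₂ ha₂ (hind₂ _ ha₂),
        ker_pointType α₃ hz₃ ha₃ (hind₃ _ ha₃),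
        map_mkQ_inf _ _ _ (span_one_le_constSub p₂),
        map_mkQ_inf _ _ _ (span_one_le_constSub p₃)]
  unfold IsTriangle
  rw [hH, hker]
  rcases Finset.eq_empty_or_nonempty (p₁ ∩ p₂ ∩ p₃) with htr | htr
  · by_cases h12 : (p₁ ∩ p₂).Nonempty
    · by_cases h13 : (p₁ ∩ p₃).Nonempty
      · by_cases h23 : (p₂ ∩ p₃).Nonempty
        · -- the good case: pairwise intersections nonempty, triple empty
          obtain ⟨a, ha⟩ := h12
          obtain ⟨b, hb⟩ := h13
          obtain ⟨d, hd⟩ := h23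
          have e12 : p₁ ≠ p₂ := by
            rintro rfl
            refine Finset.eq_empty_iff_forall_notMem.1 htr b ?_
            rw [Finset.mem_inter] at hb ⊢
            rw [Finset.mem_inter]
            exact ⟨⟨hb.1, hb.1⟩, hb.2⟩
          have e13 : p₁ ≠ p₃ := by
            rintro rfl
            refine Finset.eq_empty_iff_forall_notMem.1 htr d ?_
            rw [Finset.mem_inter] at hd ⊢
            rw [Finset.mem_inter]
            exact ⟨⟨hd.2, hd.1⟩, hd.2⟩
          have e23 : p₂ ≠ p₃ := by
            rintro rfl
            refine Finset.eq_empty_iff_forall_notMem.1 htr b ?_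
            rw [Finset.mem_inter] at hb ⊢
            rw [Finset.mem_inter]
            exact ⟨⟨hb.1, hb.2⟩, hb.2⟩
          have hbd : b ≠ d := by
            rintro rfl
            refine Finset.eq_empty_iff_forall_notMem.1 htr b ?_
            rw [Finset.mem_inter] at hb hd ⊢
            rw [Finset.mem_inter]
            exact ⟨⟨hb.1, hd.1⟩, hb.2⟩
          have h12s := inter_eq_singleton hP₁ hP₂ e12 ha
          have h13s := inter_eq_singleton hP₁ hP₃ e13 hb
          have h23s := inter_eq_singleton hP₂ hP₃ e23 hd
          have hglue : constSub p₁ ⊓ constSub p₂ ⊓ constSub p₃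
              = constSub (p₁ ∪ p₂ ∪ p₃) := by
            rw [constSub_inf_constSub ⟨a, ha⟩, constSub_inf_constSub
              ⟨b, Finset.mem_inter.2 ⟨Finset.mem_union_left _ (Finset.mem_inter.1 hb).1,
                (Finset.mem_inter.1 hb).2⟩⟩]
          obtain ⟨hrank, hle⟩ := corank_one (p₁ ∪ p₂ ∪ p₃)
            ⟨a₁, Finset.mem_union_left _ (Finset.mem_union_left _ ha₁)⟩
          rw [hglue, hrank]
          have c1 := Finset.card_union_add_card_inter p₁ p₂
          rw [h12s, Finset.card_singleton] at c1
          have hdist : (p₁ ∪ p₂) ∩ p₃ = {b} ∪ {d} := by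
            rw [Finset.union_inter_distrib_right, h13s, h23s]
          have c2 := Finset.card_union_add_card_inter (p₁ ∪ p₂) p₃
          rw [hdist] at c2
          have hcd : ({b} ∪ {d} : Finset (Fin n)).card = 2 := by
            rw [Finset.card_union_of_disjoint (Finset.disjoint_singleton.2 hbd)]
            rfl
          rw [hcd] at c2
          refine iff_of_true ?_ ⟨⟨a, ha⟩, ⟨b, hb⟩, ⟨d, hd⟩, htr⟩
          omega
        · -- p₂ ∩ p₃ = ∅, p₁ ∩ p₂ and p₁ ∩ p₃ nonempty
          refine iff_of_false ?_ (fun h => h23 h.2.2.1)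
          obtain ⟨a, ha⟩ := h12
          obtain ⟨b, hb⟩ := h13
          have e12 : p₁ ≠ p₂ := by intro e; subst e; exact h23 ⟨b, hb⟩
          have e13 : p₁ ≠ p₃ := by
            intro e; subst e
            exact h23 ⟨a, Finset.mem_inter.2
              ⟨(Finset.mem_inter.1 ha).2, (Finset.mem_inter.1 ha).1⟩⟩
          have h12s := inter_eq_singleton hP₁ hP₂ e12 ha
          have h13s := inter_eq_singleton hP₁ hP₃ e13 hb
          have h23e : p₂ ∩ p₃ = ∅ := Finset.not_nonempty_iff_eq_empty.1 h23
          have hglue : constSub p₁ ⊓ constSub p₂ ⊓ constSub p₃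
              = constSub (p₁ ∪ p₂ ∪ p₃) := by
            rw [constSub_inf_constSub ⟨a, ha⟩, constSub_inf_constSub
              ⟨b, Finset.mem_inter.2 ⟨Finset.mem_union_left _ (Finset.mem_inter.1 hb).1,
                (Finset.mem_inter.1 hb).2⟩⟩]
          obtain ⟨hrank, hle⟩ := corank_one (p₁ ∪ p₂ ∪ p₃)
            ⟨a₁, Finset.mem_union_left _ (Finset.mem_union_left _ ha₁)⟩
          rw [hglue, hrank]
          have c1 := Finset.card_union_add_card_inter p₁ p₂
          rw [h12s, Finset.card_singleton] at c1
          have hdist : (p₁ ∪ p₂) ∩ p₃ = {b} ∪ ∅ := by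
            rw [Finset.union_inter_distrib_right, h13s, h23e]
          have c2 := Finset.card_union_add_card_inter (p₁ ∪ p₂) p₃
          rw [hdist, Finset.union_empty, Finset.card_singleton] at c2
          omega
      · by_cases h23 : (p₂ ∩ p₃).Nonempty
        · -- p₁ ∩ p₃ = ∅, p₁ ∩ p₂ and p₂ ∩ p₃ nonempty
          refine iff_of_false ?_ (fun h => h13 h.2.1)
          obtain ⟨a, ha⟩ := h12
          obtain ⟨d, hd⟩ := h23
          have e12 : p₁ ≠ p₂ := by intro e; subst e; exact h13 ⟨d, hd⟩
          have e23 : p₂ ≠ p₃ := by intro e; subst e; exact h13 ⟨a, ha⟩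
          have h12s := inter_eq_singleton hP₁ hP₂ e12 ha
          have h23s := inter_eq_singleton hP₂ hP₃ e23 hd
          have h13e : p₁ ∩ p₃ = ∅ := Finset.not_nonempty_iff_eq_empty.1 h13
          have hglue : constSub p₁ ⊓ constSub p₂ ⊓ constSub p₃
              = constSub (p₁ ∪ p₂ ∪ p₃) := by
            rw [constSub_inf_constSub ⟨a, ha⟩, constSub_inf_constSub
              ⟨d, Finset.mem_inter.2 ⟨Finset.mem_union_right _ (Finset.mem_inter.1 hd).1,
                (Finset.mem_inter.1 hd).2⟩⟩]
          obtain ⟨hrank, hle⟩ := corank_one (p₁ ∪ p₂ ∪ p₃)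
            ⟨a₁, Finset.mem_union_left _ (Finset.mem_union_left _ ha₁)⟩
          rw [hglue, hrank]
          have c1 := Finset.card_union_add_card_inter p₁ p₂
          rw [h12s, Finset.card_singleton] at c1
          have hdist : (p₁ ∪ p₂) ∩ p₃ = ∅ ∪ {d} := by
            rw [Finset.union_inter_distrib_right, h13e, h23s]
          have c2 := Finset.card_union_add_card_inter (p₁ ∪ p₂) p₃
          rw [hdist, Finset.empty_union, Finset.card_singleton] at c2
          omega
        · -- only p₁ ∩ p₂ nonempty
          refine iff_of_false ?_ (fun h => h13 h.2.1)
          have h13e : p₁ ∩ p₃ = ∅ := Finset.not_nonempty_iff_eq_empty.1 h13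
          have h23e : p₂ ∩ p₃ = ∅ := Finset.not_nonempty_iff_eq_empty.1 h23
          have hglue : constSub p₁ ⊓ constSub p₂ ⊓ constSub p₃
              = constSub (p₁ ∪ p₂) ⊓ constSub p₃ := by
            rw [constSub_inf_constSub h12]
          have hdj : Disjoint (p₁ ∪ p₂) p₃ :=
            Finset.disjoint_union_left.2
              ⟨Finset.disjoint_iff_inter_eq_empty.2 h13e,
               Finset.disjoint_iff_inter_eq_empty.2 h23e⟩
          obtain ⟨hrank, hle⟩ := corank_two (p₁ ∪ p₂) p₃ hdj
            ⟨a₁, Finset.mem_union_left _ ha₁⟩ ⟨a₃, ha₃⟩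
          rw [hglue, hrank]
          by_cases e12 : p₁ = p₂
          · subst e12
            have hSc : (p₁ ∪ p₁).card = p₁.card := by rw [Finset.union_self]
            omega
          · obtain ⟨a, ha⟩ := h12
            have h12s := inter_eq_singleton hP₁ hP₂ e12 ha
            have c1 := Finset.card_union_add_card_inter p₁ p₂
            rw [h12s, Finset.card_singleton] at c1
            omega
    · by_cases h13 : (p₁ ∩ p₃).Nonempty
      · by_cases h23 : (p₂ ∩ p₃).Nonempty
        · -- p₁ ∩ p₂ = ∅, p₁ ∩ p₃ and p₂ ∩ p₃ nonempty
          refine iff_of_false ?_ (fun h => h12 h.1)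
          obtain ⟨b, hb⟩ := h13
          obtain ⟨d, hd⟩ := h23
          have e13 : p₁ ≠ p₃ := by
            intro e; subst e
            exact h12 ⟨d, Finset.mem_inter.2
              ⟨(Finset.mem_inter.1 hd).2, (Finset.mem_inter.1 hd).1⟩⟩
          have e23 : p₂ ≠ p₃ := by intro e; subst e; exact h12 ⟨b, hb⟩
          have h13s := inter_eq_singleton hP₁ hP₃ e13 hb
          have h23s' : p₃ ∩ p₂ = {d} := inter_eq_singleton hP₃ hP₂ (Ne.symm e23)
            (Finset.mem_inter.2 ⟨(Finset.mem_inter.1 hd).2, (Finset.mem_inter.1 hd).1⟩)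
          have h12e : p₁ ∩ p₂ = ∅ := Finset.not_nonempty_iff_eq_empty.1 h12
          have hglue : constSub p₁ ⊓ constSub p₂ ⊓ constSub p₃
              = constSub (p₁ ∪ p₃ ∪ p₂) := by
            rw [inf_right_comm, constSub_inf_constSub ⟨b, hb⟩, constSub_inf_constSub
              ⟨d, Finset.mem_inter.2 ⟨Finset.mem_union_right _ (Finset.mem_inter.1 hd).2,
                (Finset.mem_inter.1 hd).1⟩⟩]
          obtain ⟨hrank, hle⟩ := corank_one (p₁ ∪ p₃ ∪ p₂)
            ⟨a₁, Finset.mem_union_left _ (Finset.mem_union_left _ ha₁)⟩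
          rw [hglue, hrank]
          have c1 := Finset.card_union_add_card_inter p₁ p₃
          rw [h13s, Finset.card_singleton] at c1
          have hdist : (p₁ ∪ p₃) ∩ p₂ = ∅ ∪ {d} := by
            rw [Finset.union_inter_distrib_right, h12e, h23s']
          have c2 := Finset.card_union_add_card_inter (p₁ ∪ p₃) p₂
          rw [hdist, Finset.empty_union, Finset.card_singleton] at c2
          omega
        · -- only p₁ ∩ p₃ nonempty
          refine iff_of_false ?_ (fun h => h12 h.1)
          have h12e : p₁ ∩ p₂ = ∅ := Finset.not_nonempty_iff_eq_empty.1 h12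
          have h23e : p₂ ∩ p₃ = ∅ := Finset.not_nonempty_iff_eq_empty.1 h23
          have hglue : constSub p₁ ⊓ constSub p₂ ⊓ constSub p₃
              = constSub (p₁ ∪ p₃) ⊓ constSub p₂ := by
            rw [inf_right_comm, constSub_inf_constSub h13]
          have hdj : Disjoint (p₁ ∪ p₃) p₂ :=
            Finset.disjoint_union_left.2
              ⟨Finset.disjoint_iff_inter_eq_empty.2 h12e,
               Finset.disjoint_iff_inter_eq_empty.2
                 (by rw [Finset.inter_comm]; exact h23e)⟩
          obtain ⟨hrank, hle⟩ := corank_two (p₁ ∪ p₃) p₂ hdj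
            ⟨a₁, Finset.mem_union_left _ ha₁⟩ ⟨a₂, ha₂⟩
          rw [hglue, hrank]
          by_cases e13 : p₁ = p₃
          · subst e13
            have hSc : (p₁ ∪ p₁).card = p₁.card := by rw [Finset.union_self]
            omega
          · obtain ⟨b, hb⟩ := h13
            have h13s := inter_eq_singleton hP₁ hP₃ e13 hb
            have c1 := Finset.card_union_add_card_inter p₁ p₃
            rw [h13s, Finset.card_singleton] at c1
            omega
      · by_cases h23 : (p₂ ∩ p₃).Nonempty
        · -- only p₂ ∩ p₃ nonempty
          refine iff_of_false ?_ (fun h => h12 h.1)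
          have h12e : p₁ ∩ p₂ = ∅ := Finset.not_nonempty_iff_eq_empty.1 h12
          have h13e : p₁ ∩ p₃ = ∅ := Finset.not_nonempty_iff_eq_empty.1 h13
          have hglue : constSub p₁ ⊓ constSub p₂ ⊓ constSub p₃
              = constSub (p₂ ∪ p₃) ⊓ constSub p₁ := by
            rw [inf_assoc, inf_comm (constSub p₁), constSub_inf_constSub h23]
          have hdj : Disjoint (p₂ ∪ p₃) p₁ :=
            Finset.disjoint_union_left.2
              ⟨Finset.disjoint_iff_inter_eq_empty.2
                 (by rw [Finset.inter_comm]; exact h12e),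
               Finset.disjoint_iff_inter_eq_empty.2
                 (by rw [Finset.inter_comm]; exact h13e)⟩
          obtain ⟨hrank, hle⟩ := corank_two (p₂ ∪ p₃) p₁ hdj
            ⟨a₂, Finset.mem_union_left _ ha₂⟩ ⟨a₁, ha₁⟩
          rw [hglue, hrank]
          by_cases e23 : p₂ = p₃
          · subst e23
            have hSc : (p₂ ∪ p₂).card = p₂.card := by rw [Finset.union_self]
            omega
          · obtain ⟨d, hd⟩ := h23
            have h23s := inter_eq_singleton hP₂ hP₃ e23 hd
            have c1 := Finset.card_union_add_card_inter p₂ p₃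
            rw [h23s, Finset.card_singleton] at c1
            omega
        · -- all pairwise intersections empty
          refine iff_of_false ?_ (fun h => h12 h.1)
          have h12e : p₁ ∩ p₂ = ∅ := Finset.not_nonempty_iff_eq_empty.1 h12
          have h13e : p₁ ∩ p₃ = ∅ := Finset.not_nonempty_iff_eq_empty.1 h13
          have h23e : p₂ ∩ p₃ = ∅ := Finset.not_nonempty_iff_eq_empty.1 h23
          obtain ⟨hrank, hle⟩ := corank_three p₁ p₂ p₃
            (Finset.disjoint_iff_inter_eq_empty.2 h12e)
            (Finset.disjoint_iff_inter_eq_empty.2 h13e)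
            (Finset.disjoint_iff_inter_eq_empty.2 h23e)
            ⟨a₁, ha₁⟩ ⟨a₂, ha₂⟩ ⟨a₃, ha₃⟩
          rw [hrank]
          omega
  · -- the triple intersection is nonempty
    obtain ⟨t, ht⟩ := htr
    have ht12 : t ∈ p₁ ∩ p₂ := (Finset.mem_inter.1 ht).1
    have ht1 : t ∈ p₁ := (Finset.mem_inter.1 ht12).1
    have ht2 : t ∈ p₂ := (Finset.mem_inter.1 ht12).2
    have ht3 : t ∈ p₃ := (Finset.mem_inter.1 ht).2
    refine iff_of_false ?_ (fun h => by rw [h.2.2.2] at ht; simp at ht)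
    have hglue : constSub p₁ ⊓ constSub p₂ ⊓ constSub p₃
        = constSub (p₁ ∪ p₂ ∪ p₃) := by
      rw [constSub_inf_constSub ⟨t, ht12⟩, constSub_inf_constSub
        ⟨t, Finset.mem_inter.2 ⟨Finset.mem_union_left _ ht1, ht3⟩⟩]
    obtain ⟨hrank, hle⟩ := corank_one (p₁ ∪ p₂ ∪ p₃)
      ⟨a₁, Finset.mem_union_left _ (Finset.mem_union_left _ ha₁)⟩
    rw [hglue, hrank]
    by_cases e12 : p₁ = p₂
    · subst e12
      by_cases e13 : p₁ = p₃
      · subst e13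
        have hSc : (p₁ ∪ p₁ ∪ p₁).card = p₁.card := by
          rw [Finset.union_self, Finset.union_self]
        omega
      · have h13s := inter_eq_singleton hP₁ hP₃ e13 (Finset.mem_inter.2 ⟨ht1, ht3⟩)
        have c2 := Finset.card_union_add_card_inter p₁ p₃
        rw [h13s, Finset.card_singleton] at c2
        have hSc : (p₁ ∪ p₁ ∪ p₃).card = (p₁ ∪ p₃).card := by rw [Finset.union_self]
        omega
    · by_cases e13 : p₁ = p₃
      · subst e13
        have h12s := inter_eq_singleton hP₁ hP₂ e12 ht12
        have c2 := Finset.card_union_add_card_inter p₁ p₂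
        rw [h12s, Finset.card_singleton] at c2
        have hSc : (p₁ ∪ p₂ ∪ p₁).card = (p₁ ∪ p₂).card := by
          congr 1
          ext x
          simp only [Finset.mem_union]
          tauto
        omega
      · by_cases e23 : p₂ = p₃
        · subst e23
          have h12s := inter_eq_singleton hP₁ hP₂ e12 ht12
          have c2 := Finset.card_union_add_card_inter p₁ p₂
          rw [h12s, Finset.card_singleton] at c2
          have hSc : (p₁ ∪ p₂ ∪ p₂).card = (p₁ ∪ p₂).card := by
            congr 1
            ext x
            simp only [Finset.mem_union]
            tauto
          omega
        · have h12s := inter_eq_singleton hP₁ hP₂ e12 ht12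
          have h13s := inter_eq_singleton hP₁ hP₃ e13 (Finset.mem_inter.2 ⟨ht1, ht3⟩)
          have h23s := inter_eq_singleton hP₂ hP₃ e23 (Finset.mem_inter.2 ⟨ht2, ht3⟩)
          have c1 := Finset.card_union_add_card_inter p₁ p₂
          rw [h12s, Finset.card_singleton] at c1
          have hdist : (p₁ ∪ p₂) ∩ p₃ = {t} := by
            rw [Finset.union_inter_distrib_right, h13s, h23s, Finset.union_self]
          have c2 := Finset.card_union_add_card_inter (p₁ ∪ p₂) p₃
          rw [hdist, Finset.card_singleton] at c2
          omega
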